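/- arXiv:2002.05993 — 2 statements merged into one kernel-verified Lean document; each statement's English description precedes it below -/
import Mathlib

section
/- (Proposition: PGA duality via CGA duality.) For every A in the subalgebra CGA₀, the two twisted-dual expressions agree: ♯((A ∧ e∞) I_c⁻¹) = ((♯A) ∧ e₀) I_c⁻¹, i.e. ♯((A ∧ e∞)*) = ((♯A) ∧ e₀)*, where X* := X I_c⁻¹ = −X I_c is the CGA dual. -/
open CliffordAlgebra

/-- The matrix of the CGA inner product on `V = ℝ⁵`; indices `0, 1, 2, 3, 4`
correspond to the basis `e₀, e₁, e₂, e₃, e∞`. -/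
def Bmat : Matrix (Fin 5) (Fin 5) ℝ :=
  !![0, 0, 0, 0, -1;
     0, 1, 0, 0, 0;
     0, 0, 1, 0, 0;
     0, 0, 0, 1, 0;
     -1, 0, 0, 0, 0]

/-- The CGA quadratic form
`Q(a e₀ + x₁e₁ + x₂e₂ + x₃e₃ + b e∞) = x₁² + x₂² + x₃² − 2ab`. -/
noncomputable def Q : QuadraticForm ℝ (Fin 5 → ℝ) := Bmat.toQuadraticMap'

/-- The basis vectors of `V = ℝ⁵`: `e 0 = e₀`, `e 1, e 2, e 3` Euclidean, `e 4 = e∞`. -/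
def e (i : Fin 5) : Fin 5 → ℝ := Pi.single i 1

/-- The linear map `♯ : V → V` fixing `e₁, e₂, e₃` and sending `e₀ ↦ -e∞`, `e∞ ↦ -e₀`. -/
def sharpV : (Fin 5 → ℝ) →ₗ[ℝ] (Fin 5 → ℝ) where
  toFun v i := if i = 0 then -(v 4) else if i = 4 then -(v 0) else v i
  map_add' u v := by
    funext i
    by_cases h : i = 0 <;> by_cases h' : i = 4 <;> simp [h, h'] <;> ring
  map_smul' c v := by
    funext i
    by_cases h : i = 0 <;> by_cases h' : i = 4 <;> simp [h, h'] <;> ring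

/-- Outer (wedge) product of a multivector with a vector:
`A ∧ v := ½ (A ι(v) + ι(v) α(A))`, where `α` is the grade involution. -/
noncomputable def wedgeVec (A : CliffordAlgebra Q) (v : Fin 5 → ℝ) : CliffordAlgebra Q :=
  (1 / 2 : ℝ) • (A * ι Q v + ι Q v * involute A)

/-- The conformal pseudoscalar `I_c = (((e₀ ∧ e₁) ∧ e₂) ∧ e₃) ∧ e∞`. -/
noncomputable def Ic : CliffordAlgebra Q :=
  wedgeVec (wedgeVec (wedgeVec (wedgeVec (ι Q (e 0)) (e 1)) (e 2)) (e 3)) (e 4)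

/-- The subalgebra `CGA₀` of CGA generated by `ι(e₀), ι(e₁), ι(e₂), ι(e₃)`. -/
noncomputable def CGA₀ : Subalgebra ℝ (CliffordAlgebra Q) :=
  Algebra.adjoin ℝ {ι Q (e 0), ι Q (e 1), ι Q (e 2), ι Q (e 3)}

----- auxiliary lemmas -----

lemma Q_apply (v : Fin 5 → ℝ) :
    Q v = -(v 0 * v 4) + v 1 * v 1 + v 2 * v 2 + v 3 * v 3 + -(v 4 * v 0) := by
  simp [Q, Matrix.toQuadraticMap', LinearMap.BilinMap.toQuadraticMap,
    Matrix.toLinearMap₂'_apply, Bmat, Fin.sum_univ_five, Matrix.vecHead, Matrix.vecTail]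
  simp [Matrix.toQuadraticForm', LinearMap.BilinMap.toQuadraticMap,
    Matrix.toLinearMap₂'_apply, Fin.sum_univ_five, Matrix.vecHead, Matrix.vecTail]

noncomputable def g (i : Fin 5) : CliffordAlgebra Q := ι Q (e i)

lemma g_def (i : Fin 5) : ι Q (e i) = g i := rfl

lemma ortho_of (i j : Fin 5) (h : ¬(i = 0 ∧ j = 4) ∧ ¬(i = 4 ∧ j = 0)) (hij : i ≠ j) :
    Q.IsOrtho (e i) (e j) := by
  unfold QuadraticMap.IsOrtho
  fin_cases i <;> fin_cases j <;> simp_all <;>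
    simp [Q_apply, e, Pi.single_apply]

lemma gswap {i j : Fin 5} (h : ¬(j = 0 ∧ i = 4) ∧ ¬(j = 4 ∧ i = 0)) (hij : j ≠ i) :
    g j * g i = -(g i * g j) :=
  ι_mul_ι_comm_of_isOrtho ((ortho_of j i h hij))

lemma gswap' {i j : Fin 5} (h : ¬(j = 0 ∧ i = 4) ∧ ¬(j = 4 ∧ i = 0)) (hij : j ≠ i)
    (x : CliffordAlgebra Q) : g j * (g i * x) = -(g i * (g j * x)) := by
  rw [← mul_assoc, gswap h hij, neg_mul, mul_assoc]

lemma s10 : g 1 * g 0 = -(g 0 * g 1) := gswap (by decide) (by decide)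
lemma s20 : g 2 * g 0 = -(g 0 * g 2) := gswap (by decide) (by decide)
lemma s21 : g 2 * g 1 = -(g 1 * g 2) := gswap (by decide) (by decide)
lemma s30 : g 3 * g 0 = -(g 0 * g 3) := gswap (by decide) (by decide)
lemma s31 : g 3 * g 1 = -(g 1 * g 3) := gswap (by decide) (by decide)
lemma s32 : g 3 * g 2 = -(g 2 * g 3) := gswap (by decide) (by decide)
lemma s41 : g 4 * g 1 = -(g 1 * g 4) := gswap (by decide) (by decide)
lemma s42 : g 4 * g 2 = -(g 2 * g 4) := gswap (by decide) (by decide)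
lemma s43 : g 4 * g 3 = -(g 3 * g 4) := gswap (by decide) (by decide)
lemma s10' (x) : g 1 * (g 0 * x) = -(g 0 * (g 1 * x)) := gswap' (by decide) (by decide) x
lemma s20' (x) : g 2 * (g 0 * x) = -(g 0 * (g 2 * x)) := gswap' (by decide) (by decide) x
lemma s21' (x) : g 2 * (g 1 * x) = -(g 1 * (g 2 * x)) := gswap' (by decide) (by decide) x
lemma s30' (x) : g 3 * (g 0 * x) = -(g 0 * (g 3 * x)) := gswap' (by decide) (by decide) x
lemma s31' (x) : g 3 * (g 1 * x) = -(g 1 * (g 3 * x)) := gswap' (by decide) (by decide) x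
lemma s32' (x) : g 3 * (g 2 * x) = -(g 2 * (g 3 * x)) := gswap' (by decide) (by decide) x
lemma s41' (x) : g 4 * (g 1 * x) = -(g 1 * (g 4 * x)) := gswap' (by decide) (by decide) x
lemma s42' (x) : g 4 * (g 2 * x) = -(g 2 * (g 4 * x)) := gswap' (by decide) (by decide) x
lemma s43' (x) : g 4 * (g 3 * x) = -(g 3 * (g 4 * x)) := gswap' (by decide) (by decide) x

lemma g40 : g 4 * g 0 = -2 - g 0 * g 4 := by
  have h := ι_mul_ι_add_swap (Q := Q) (e 4) (e 0)
  have hp : QuadraticMap.polar Q (e 4) (e 0) = -2 := by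
    simp [QuadraticMap.polar, Q_apply, e, Pi.single_apply]; norm_num
  rw [hp] at h
  have h2 : algebraMap ℝ (CliffordAlgebra Q) (-2) = -2 := by
    rw [map_neg, map_ofNat]
  rw [h2] at h
  unfold g
  linear_combination (norm := noncomm_ring) h

lemma g40' (x : CliffordAlgebra Q) : g 4 * (g 0 * x) = -(2 * x) - g 0 * (g 4 * x) := by
  rw [← mul_assoc, g40, sub_mul, mul_assoc]; noncomm_ring

lemma wedge_eq (A : CliffordAlgebra Q) (v : Fin 5 → ℝ)
    (h : ι Q v * involute A = A * ι Q v) : wedgeVec A v = A * ι Q v := by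
  rw [wedgeVec, h, ← two_smul ℝ, smul_smul]; norm_num

lemma involute_g (i : Fin 5) : involute (g i) = -(g i) := involute_ι _

lemma w1 : wedgeVec (ι Q (e 0)) (e 1) = g 0 * g 1 := by
  refine wedge_eq _ _ ?_
  simp only [g_def, involute_g, mul_neg, s10, neg_neg]

lemma w2 : wedgeVec (g 0 * g 1) (e 2) = g 0 * (g 1 * g 2) := by
  have h := wedge_eq (g 0 * g 1) (e 2) ?_
  · rw [h, g_def, mul_assoc]
  · simp only [g_def, map_mul, involute_g, neg_mul, mul_neg, neg_neg]
    simp only [mul_assoc, s20', s21, s20, mul_neg, neg_neg]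

lemma w3 : wedgeVec (g 0 * (g 1 * g 2)) (e 3) = g 0 * (g 1 * (g 2 * g 3)) := by
  have h := wedge_eq (g 0 * (g 1 * g 2)) (e 3) ?_
  · rw [h, g_def, mul_assoc, mul_assoc]
  · simp only [g_def, map_mul, involute_g, neg_mul, mul_neg, neg_neg]
    simp only [mul_assoc, s30', s31', s32, s31, s30, mul_neg, neg_neg]

lemma invW3 : involute (g 0 * (g 1 * (g 2 * g 3))) = g 0 * (g 1 * (g 2 * g 3)) := by
  simp only [map_mul, involute_g, neg_mul, mul_neg, neg_neg]

lemma Ic_eq : Ic = g 0 * (g 1 * (g 2 * (g 3 * g 4))) - g 1 * (g 2 * g 3) := by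
  rw [Ic, w1, w2, w3, wedgeVec, invW3, g_def]
  have key : g 0 * (g 1 * (g 2 * g 3)) * g 4 + g 4 * (g 0 * (g 1 * (g 2 * g 3)))
      = (2 : ℝ) • (g 0 * (g 1 * (g 2 * (g 3 * g 4))) - g 1 * (g 2 * g 3)) := by
    simp only [g40', s41', s42', s43', s41, s42, s43, mul_neg, neg_neg, mul_assoc,
      mul_sub, sub_mul, neg_mul, two_smul]
    noncomm_ring
  rw [key, smul_smul]; norm_num

lemma invW3' : involute (g 4 * (g 1 * (g 2 * g 3))) = g 4 * (g 1 * (g 2 * g 3)) := by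
  simp only [map_mul, involute_g, neg_mul, mul_neg, neg_neg]

lemma w1' : wedgeVec (ι Q (e 4)) (e 1) = g 4 * g 1 := by
  refine wedge_eq _ _ ?_
  simp only [g_def, involute_g, mul_neg, s41, neg_neg]

lemma w2' : wedgeVec (g 4 * g 1) (e 2) = g 4 * (g 1 * g 2) := by
  have h := wedge_eq (g 4 * g 1) (e 2) ?_
  · rw [h, g_def, mul_assoc]
  · simp only [g_def, map_mul, involute_g, neg_mul, mul_neg, neg_neg]
    simp only [mul_assoc, s41', s41, s42, s21', s21, mul_neg, neg_neg, neg_mul]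

lemma w3' : wedgeVec (g 4 * (g 1 * g 2)) (e 3) = g 4 * (g 1 * (g 2 * g 3)) := by
  have h := wedge_eq (g 4 * (g 1 * g 2)) (e 3) ?_
  · rw [h, g_def, mul_assoc, mul_assoc]
  · simp only [g_def, map_mul, involute_g, neg_mul, mul_neg, neg_neg]
    simp only [mul_assoc, s41', s42', s43, s42, s41, s31', s32', s32, s31, mul_neg, neg_neg, neg_mul]

lemma wlast' : wedgeVec (g 4 * (g 1 * (g 2 * g 3))) (e 0) = -Ic := by
  rw [wedgeVec, invW3', g_def, Ic_eq]
  have key : g 4 * (g 1 * (g 2 * g 3)) * g 0 + g 0 * (g 4 * (g 1 * (g 2 * g 3)))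
      = (2 : ℝ) • (-(g 0 * (g 1 * (g 2 * (g 3 * g 4))) - g 1 * (g 2 * g 3))) := by
    simp only [mul_assoc, s10', s20', s30', s10, s20, s30, g40', g40, s41', s42', s43',
      s41, s42, s43, mul_neg, neg_neg, neg_mul, mul_sub, sub_mul, two_smul]
    noncomm_ring
  rw [key, smul_smul]; norm_num

lemma sharp_e0 : sharpV (e 0) = -(e 4) := by
  funext i; fin_cases i <;> simp [sharpV, e, Pi.single_apply]
lemma sharp_e1 : sharpV (e 1) = e 1 := by
  funext i; fin_cases i <;> simp [sharpV, e, Pi.single_apply]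
lemma sharp_e2 : sharpV (e 2) = e 2 := by
  funext i; fin_cases i <;> simp [sharpV, e, Pi.single_apply]
lemma sharp_e3 : sharpV (e 3) = e 3 := by
  funext i; fin_cases i <;> simp [sharpV, e, Pi.single_apply]
lemma sharp_e4 : sharpV (e 4) = -(e 0) := by
  funext i; fin_cases i <;> simp [sharpV, e, Pi.single_apply]

section Fside
variable (F : CliffordAlgebra Q →ₐ[ℝ] CliffordAlgebra Q)
  (hF : ∀ v : Fin 5 → ℝ, F (ι Q v) = ι Q (sharpV v))

include hF

lemma F_involute (x : CliffordAlgebra Q) : F (involute x) = involute (F x) := by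
  have h : (F.comp involute : CliffordAlgebra Q →ₐ[ℝ] CliffordAlgebra Q)
      = involute.comp F := by
    apply CliffordAlgebra.hom_ext
    apply LinearMap.ext
    intro v
    simp [hF, involute_ι, map_neg]
  exact AlgHom.congr_fun h x

lemma F_wedge (A : CliffordAlgebra Q) (v : Fin 5 → ℝ) :
    F (wedgeVec A v) = wedgeVec (F A) (sharpV v) := by
  rw [wedgeVec, map_smul, map_add, map_mul, map_mul, hF, F_involute F hF, wedgeVec]

end Fside

lemma wedge_negA (A : CliffordAlgebra Q) (v : Fin 5 → ℝ) :
    wedgeVec (-A) v = -wedgeVec A v := by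
  rw [wedgeVec, wedgeVec, map_neg, neg_mul, mul_neg, ← neg_add, smul_neg]

lemma wedge_negv (A : CliffordAlgebra Q) (v : Fin 5 → ℝ) :
    wedgeVec A (-v) = -wedgeVec A v := by
  rw [wedgeVec, wedgeVec, map_neg, neg_mul, mul_neg, ← neg_add, smul_neg]

lemma F_Ic (F : CliffordAlgebra Q →ₐ[ℝ] CliffordAlgebra Q)
    (hF : ∀ v : Fin 5 → ℝ, F (ι Q v) = ι Q (sharpV v)) : F Ic = -Ic := by
  conv_lhs => rw [Ic]
  rw [F_wedge F hF, F_wedge F hF, F_wedge F hF, F_wedge F hF, hF,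
    sharp_e0, sharp_e1, sharp_e2, sharp_e3, sharp_e4, map_neg,
    wedge_negA, wedge_negA, wedge_negA, wedge_negv, wedge_negA, neg_neg,
    w1', w2', w3', wlast']

/-- For every `A ∈ CGA₀`, `♯((A ∧ e∞) I_c⁻¹) = ((♯A) ∧ e₀) I_c⁻¹`,
where `X* := X I_c⁻¹ = −X I_c` is the CGA dual. -/
theorem pga_dual_via_cga (F : CliffordAlgebra Q →ₐ[ℝ] CliffordAlgebra Q)
    (hF : ∀ v : Fin 5 → ℝ, F (ι Q v) = ι Q (sharpV v)) :
    ∀ A ∈ CGA₀,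
      F (wedgeVec A (e 4) * (-Ic)) = wedgeVec (F A) (e 0) * (-Ic) := by
  intro A _
  rw [map_mul, map_neg, F_Ic F hF, F_wedge F hF, sharp_e4, wedge_negv]
  simp [neg_mul, mul_neg, neg_neg]
end

section
/- (Plane correspondence.) For all x₁, x₂, x₃ ∈ E = span{e₁, e₂, e₃}, the image under ♯ of the PGA plane through the PGA points P(x₁), P(x₂), P(x₃) equals the CGA dual (IPNS) representation of that plane: ♯(p) = (((ι(v_{x₁}) ∧ ι(v_{x₂})) ∧ v_{x₃}) ∧ e∞) I_c⁻¹, where p := ((ι(e₀+x₁) ∧ ι(e₀+x₂)) ∧ (e₀+x₃))^{*_P} is the regressive product P(x₁) ∨ P(x₂) ∨ P(x₃) (using that P(xᵢ)^{*_P} = ι(e₀+xᵢ)), v_y := e₀ + y + ½Q(y)e∞, and for vectors u, w ∈ V, ι(u) ∧ ι(w) := ½(ι(u)ι(w) − ι(w)ι(u)). -/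
open CliffordAlgebra

/-- The conformal embedding `v_x = e₀ + x + ½ Q(x) e∞` of a Euclidean point `x`. -/
noncomputable def vpt (x : Fin 5 → ℝ) : Fin 5 → ℝ :=
  e 0 + x + (Q x / 2) • e 4

/-- The wedge product of two vectors: `ι(u) ∧ ι(w) := ½(ι(u)ι(w) − ι(w)ι(u))`. -/
noncomputable def wedge2 (u w : Fin 5 → ℝ) : CliffordAlgebra Q :=
  (1 / 2 : ℝ) • (ι Q u * ι Q w - ι Q w * ι Q u)

/-- The projective (PGA) dual `A^{*_P} := ♯((A ∧ e∞) I_c⁻¹)`, with `I_c⁻¹ = -I_c`,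
expressed relative to a realization `F` of the involution `♯` on the Clifford algebra
(i.e. `F` is the algebra endomorphism induced by the isometry `♯ : V → V`,
characterized by `F (ι v) = ι (♯ v)`). -/
noncomputable def dualP (F : CliffordAlgebra Q →ₐ[ℝ] CliffordAlgebra Q)
    (A : CliffordAlgebra Q) : CliffordAlgebra Q :=
  F (wedgeVec A (e 4) * (-Ic))

section Aux

lemma Qe4 : Q (e 4) = 0 := by
  simp [Q, Bmat, e, Matrix.toQuadraticMap', Matrix.toQuadraticForm', Matrix.toLinearMap₂'_apply, Fin.sum_univ_five,
    Matrix.vecHead, Matrix.vecTail]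

lemma m_sq : ι Q (e 4) * ι Q (e 4) = 0 := by rw [ι_sq_scalar, Qe4, map_zero]

lemma wedgeVec_add_left (A B : CliffordAlgebra Q) (v : Fin 5 → ℝ) :
    wedgeVec (A + B) v = wedgeVec A v + wedgeVec B v := by
  simp only [wedgeVec, map_add, add_mul, mul_add]; module

lemma wedgeVec_smul_left (r : ℝ) (A : CliffordAlgebra Q) (v : Fin 5 → ℝ) :
    wedgeVec (r • A) v = r • wedgeVec A v := by
  simp only [wedgeVec, map_smul, smul_mul_assoc, mul_smul_comm]; module

lemma wedgeVec_neg_left (A : CliffordAlgebra Q) (v : Fin 5 → ℝ) :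
    wedgeVec (-A) v = - wedgeVec A v := by
  simp only [wedgeVec, map_neg, neg_mul, mul_neg]; module

lemma wedgeVec_add_right (A : CliffordAlgebra Q) (u v : Fin 5 → ℝ) :
    wedgeVec A (u + v) = wedgeVec A u + wedgeVec A v := by
  simp only [wedgeVec, map_add, add_mul, mul_add]; module

lemma wedgeVec_smul_right (A : CliffordAlgebra Q) (r : ℝ) (v : Fin 5 → ℝ) :
    wedgeVec A (r • v) = r • wedgeVec A v := by
  simp only [wedgeVec, map_smul, smul_mul_assoc, mul_smul_comm]; module

lemma wedgeVec_zero_left (v : Fin 5 → ℝ) : wedgeVec 0 v = 0 := by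
  simp [wedgeVec]

lemma wedge2_add_left (u v w : Fin 5 → ℝ) :
    wedge2 (u + v) w = wedge2 u w + wedge2 v w := by
  simp only [wedge2, map_add, add_mul, mul_add]; module

lemma wedge2_add_right (u v w : Fin 5 → ℝ) :
    wedge2 u (v + w) = wedge2 u v + wedge2 u w := by
  simp only [wedge2, map_add, add_mul, mul_add]; module

lemma wedge2_smul_left (r : ℝ) (u w : Fin 5 → ℝ) :
    wedge2 (r • u) w = r • wedge2 u w := by
  simp only [wedge2, map_smul, smul_mul_assoc, mul_smul_comm]; module

lemma wedge2_smul_right (r : ℝ) (u w : Fin 5 → ℝ) :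
    wedge2 u (r • w) = r • wedge2 u w := by
  simp only [wedge2, map_smul, smul_mul_assoc, mul_smul_comm]; module

lemma wedge2_self (u : Fin 5 → ℝ) : wedge2 u u = 0 := by simp [wedge2]

lemma wedge2_antisymm (u w : Fin 5 → ℝ) : wedge2 u w = - wedge2 w u := by
  simp only [wedge2]; module

/-- `(A ∧ e∞) ∧ e∞ = 0`. -/
lemma Ta (A : CliffordAlgebra Q) : wedgeVec (wedgeVec A (e 4)) (e 4) = 0 := by
  have hm : ∀ X : CliffordAlgebra Q, ι Q (e 4) * (ι Q (e 4) * X) = 0 := fun X => by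
    rw [← mul_assoc, m_sq, zero_mul]
  simp only [wedgeVec, map_smul, map_add, map_mul, involute_ι, involute_involute,
    smul_mul_assoc, mul_smul_comm, smul_add, mul_add, add_mul, mul_neg, neg_mul,
    mul_assoc, m_sq, hm, mul_zero, zero_mul, smul_zero, add_zero, zero_add]
  module

/-- `((u ∧ e∞) ∧ w) ∧ e∞ = 0`. -/
lemma L1 (u w : Fin 5 → ℝ) : wedgeVec (wedgeVec (wedge2 u (e 4)) w) (e 4) = 0 := by
  have hm : ∀ X : CliffordAlgebra Q, ι Q (e 4) * (ι Q (e 4) * X) = 0 := fun X => by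
    rw [← mul_assoc, m_sq, zero_mul]
  have hcm0 : ι Q w * ι Q (e 4) =
      (QuadraticMap.polar Q w (e 4)) • (1 : CliffordAlgebra Q) - ι Q (e 4) * ι Q w := by
    have := ι_mul_ι_add_swap (Q := Q) w (e 4)
    rw [Algebra.algebraMap_eq_smul_one] at this
    linear_combination (norm := module) this
  have hcm1 : ∀ X : CliffordAlgebra Q, ι Q w * (ι Q (e 4) * X) =
      (QuadraticMap.polar Q w (e 4)) • X - ι Q (e 4) * (ι Q w * X) := fun X => by
    rw [← mul_assoc, hcm0, sub_mul, smul_mul_assoc, one_mul, mul_assoc]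
  simp only [wedgeVec, wedge2, map_smul, map_add, map_sub, map_mul, map_neg, involute_ι,
    smul_mul_assoc, mul_smul_comm, smul_add, smul_sub, smul_neg, mul_add, add_mul,
    mul_sub, sub_mul, mul_neg, neg_mul, neg_neg, mul_assoc]
  simp only [m_sq, hm, hcm0, hcm1, mul_zero, zero_mul, smul_zero, neg_zero,
    add_zero, zero_add, sub_zero, zero_sub, mul_one, one_mul, mul_sub, mul_add, mul_neg,
    mul_smul_comm, smul_sub, smul_add, smul_neg, mul_assoc]
  module

/-- `((e∞ ∧ u) ∧ w) ∧ e∞ = 0`. -/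
lemma L1' (u w : Fin 5 → ℝ) : wedgeVec (wedgeVec (wedge2 (e 4) u) w) (e 4) = 0 := by
  rw [wedge2_antisymm, wedgeVec_neg_left, wedgeVec_neg_left, L1, neg_zero]

end Aux

/-- (Plane correspondence.) For `x₁, x₂, x₃ ∈ span{e₁,e₂,e₃}`, the PGA
plane `p = P(x₁) ∨ P(x₂) ∨ P(x₃) = ((ι(e₀+x₁) ∧ ι(e₀+x₂)) ∧ (e₀+x₃))^{*_P}` satisfies
`♯p = (((ι(v_{x₁}) ∧ ι(v_{x₂})) ∧ v_{x₃}) ∧ e∞) I_c⁻¹`. -/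

theorem sharp_plane_correspondence (F : CliffordAlgebra Q →ₐ[ℝ] CliffordAlgebra Q)
    (hF : ∀ v : Fin 5 → ℝ, F (ι Q v) = ι Q (sharpV v)) :
    ∀ x₁ x₂ x₃ : Fin 5 → ℝ,
      x₁ 0 = 0 → x₁ 4 = 0 → x₂ 0 = 0 → x₂ 4 = 0 → x₃ 0 = 0 → x₃ 4 = 0 →
      F (dualP F (wedgeVec (wedge2 (e 0 + x₁) (e 0 + x₂)) (e 0 + x₃))) =
        wedgeVec (wedgeVec (wedge2 (vpt x₁) (vpt x₂)) (vpt x₃)) (e 4) * (-Ic) := by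
  intro x₁ x₂ x₃ _h1 _h2 _h3 _h4 _h5 _h6
  have hsharp2 : ∀ v, sharpV (sharpV v) = v := by
    intro v; funext i
    fin_cases i <;> simp [sharpV]
  have hFF : ∀ y, F (F y) = y := by
    have h : F.comp F = AlgHom.id ℝ (CliffordAlgebra Q) := by
      apply CliffordAlgebra.hom_ext
      apply LinearMap.ext; intro v
      simp [hF, hsharp2 v]
    intro y
    simpa using DFunLike.congr_fun h y
  have key : wedgeVec (wedgeVec (wedge2 (e 0 + x₁) (e 0 + x₂)) (e 0 + x₃)) (e 4) =
      wedgeVec (wedgeVec (wedge2 (vpt x₁) (vpt x₂)) (vpt x₃)) (e 4) := by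
    show _ = wedgeVec (wedgeVec (wedge2 ((e 0 + x₁) + (Q x₁ / 2) • e 4)
        ((e 0 + x₂) + (Q x₂ / 2) • e 4)) ((e 0 + x₃) + (Q x₃ / 2) • e 4)) (e 4)
    simp only [wedge2_add_left, wedge2_add_right, wedge2_smul_left, wedge2_smul_right,
      wedge2_self, wedgeVec_add_left, wedgeVec_smul_left, wedgeVec_add_right,
      wedgeVec_smul_right, wedgeVec_zero_left, Ta, L1, L1', smul_zero, add_zero, zero_add]
  rw [dualP, hFF, key]
end
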